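/- arXiv:1407.8027 — 3 statements merged into one kernel-verified Lean document; each statement's English description precedes it below -/
import Mathlib

section
/- Let R be a commutative Noetherian ring, let m be a maximal ideal of R, and let M be a finitely generated R-module. Let M_m denote the localization of M at m, and let m₀ = m·R_m be the maximal ideal of the local ring R_m. Then the natural morphism M → M_m induces an isomorphism between the m-adic completion of M and the m₀-adic completion of M_m. -/
open Submodule IsLocalizedModule

section Aux

variable {R M N : Type*} (S : Type*) [CommRing R] [CommRing S] [AddCommGroup M] [AddCommGroup N]
  [Module R M] [Module R N] [Algebra R S] [Module S N] [IsScalarTower R S N]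
  (p : Submonoid R) [IsLocalization p S] (f : M →ₗ[R] N) [IsLocalizedModule p f]

lemma my_localized'_smul_top (I : Ideal R) :
    (I • ⊤ : Submodule R M).localized' S p f
      = (I.map (algebraMap R S)) • (⊤ : Submodule S N) := by
  apply le_antisymm
  · rintro x ⟨y, hy, s, rfl⟩
    refine Submodule.smul_induction_on hy (fun a ha z _ => ?_) (fun y z hy' hz' => ?_)
    · rw [mk'_smul, ← algebraMap_smul S a]
      exact Submodule.smul_mem_smul (Ideal.mem_map_of_mem _ ha) trivial
    · rw [mk'_add]
      exact add_mem hy' hz'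
  · rw [Submodule.smul_le]
    rintro b hb x -
    have : I.map (algebraMap R S) ≤
        ((I • ⊤ : Submodule R M).localized' S p f).comap
          (LinearMap.toSpanSingleton S N x) := by
      rw [Ideal.map_le_iff_le_comap]
      intro a ha
      obtain ⟨⟨z, s⟩, rfl⟩ := IsLocalizedModule.mk'_surjective p f x
      simp only [Ideal.mem_comap, Submodule.mem_comap, LinearMap.toSpanSingleton_apply,
        Function.uncurry_apply_pair]
      rw [algebraMap_smul, ← mk'_smul]
      exact ⟨a • z, Submodule.smul_mem_smul ha trivial, s, rfl⟩
    exact this hb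

lemma my_exists_mul_sub_one_mem (m : Ideal R) [m.IsMaximal] {s : R}
    (hs : s ∈ m.primeCompl) (n : ℕ) : ∃ t : R, t * s - 1 ∈ m ^ n := by
  obtain ⟨z, i, hi, h1⟩ := Ideal.IsMaximal.exists_inv ‹m.IsMaximal› hs
  have hzs : z * s = 1 - i := by linear_combination h1
  obtain ⟨c, hc⟩ := sub_dvd_pow_sub_pow 1 i n
  refine ⟨z * c, ?_⟩
  have : z * c * s - 1 = -(i ^ n) := by
    rw [one_pow] at hc
    linear_combination c * hzs - hc
  rw [this]
  exact neg_mem (Ideal.pow_mem_pow hi n)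

end Aux

section Aux2

variable {R M N : Type*} (S : Type*) [CommRing R] [CommRing S] [AddCommGroup M] [AddCommGroup N]
  [Module R M] [Module R N] [Algebra R S] [Module S N] [IsScalarTower R S N]
  (m : Ideal R) [m.IsMaximal] [IsLocalization m.primeCompl S]
  (f : M →ₗ[R] N) [IsLocalizedModule m.primeCompl f]

lemma my_bijective (n : ℕ) :
    Function.Bijective ((m ^ n • ⊤ : Submodule R M).toLocalizedQuotient' S m.primeCompl f) := by
  constructor
  · have key : ∀ x : M,
        ((m ^ n • ⊤ : Submodule R M).toLocalizedQuotient' S m.primeCompl f)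
          (Submodule.Quotient.mk x) = 0 →
        (Submodule.Quotient.mk x : M ⧸ (m ^ n • ⊤ : Submodule R M)) = 0 := by
      intro x hx
      rw [Submodule.toLocalizedQuotient'_mk, Submodule.Quotient.mk_eq_zero] at hx
      obtain ⟨y, hy, s, hs⟩ := hx
      have h1 : f ((s : R) • x) = f y := by
        rw [map_smul, ← hs, ← Submonoid.smul_def, mk'_cancel']
      obtain ⟨c, hc⟩ := IsLocalizedModule.exists_of_eq (S := m.primeCompl) (f := f) h1
      have hcs : (((c * s : m.primeCompl) : R)) • x ∈ (m ^ n • ⊤ : Submodule R M) := by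
        have h2 : (((c * s : m.primeCompl) : R)) • x = c • y := by
          rw [Submonoid.coe_mul, mul_smul, ← Submonoid.smul_def, hc]
        rw [h2, Submonoid.smul_def]
        exact Submodule.smul_mem _ _ hy
      obtain ⟨t, ht⟩ := my_exists_mul_sub_one_mem m (c * s).2 n
      rw [Submodule.Quotient.mk_eq_zero]
      have hx' : x = t • ((((c * s : m.primeCompl) : R)) • x)
          - (t * ((c * s : m.primeCompl) : R) - 1) • x := by
        rw [smul_smul, sub_smul, one_smul]
        abel
      rw [hx']
      exact sub_mem (Submodule.smul_mem _ t hcs) (Submodule.smul_mem_smul ht trivial)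
    rw [← LinearMap.ker_eq_bot, eq_bot_iff]
    intro q hq
    obtain ⟨x, rfl⟩ := Submodule.Quotient.mk_surjective _ q
    rw [Submodule.mem_bot]
    exact key x (LinearMap.mem_ker.mp hq)
  · intro y
    obtain ⟨y, rfl⟩ := Submodule.Quotient.mk_surjective _ y
    obtain ⟨⟨x, s⟩, rfl⟩ := IsLocalizedModule.mk'_surjective m.primeCompl f y
    obtain ⟨t, ht⟩ := my_exists_mul_sub_one_mem m s.2 n
    refine ⟨Submodule.Quotient.mk (t • x), ?_⟩
    rw [Submodule.toLocalizedQuotient'_mk, Submodule.Quotient.eq]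
    refine ⟨(t * (s : R) - 1) • x, Submodule.smul_mem_smul ht trivial, s, ?_⟩
    have : (t * (s : R) - 1) • x = s • (t • x) - x := by
      rw [Submonoid.smul_def, smul_smul, sub_smul, one_smul, mul_comm]
    rw [Function.uncurry_apply_pair, this, mk'_sub, mk'_cancel]

/-- The levelwise additive equivalence. -/
noncomputable def myE (n : ℕ) :
    (M ⧸ (m ^ n • ⊤ : Submodule R M)) ≃+
      N ⧸ ((m.map (algebraMap R S)) ^ n • ⊤ : Submodule S N) :=
  (AddEquiv.ofBijective
      ((m ^ n • ⊤ : Submodule R M).toLocalizedQuotient' S m.primeCompl f).toAddMonoidHom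
      (my_bijective S m f n)).trans
    (Submodule.quotEquivOfEq _ _
      (by rw [my_localized'_smul_top, Ideal.map_pow])).toAddEquiv

lemma myE_mk (n : ℕ) (x : M) :
    myE S m f n (Submodule.Quotient.mk x) = Submodule.Quotient.mk (f x) := by
  rfl

lemma myE_compat {a b : ℕ} (hab : a ≤ b) (q : M ⧸ (m ^ b • ⊤ : Submodule R M)) :
    AdicCompletion.transitionMap (m.map (algebraMap R S)) N hab (myE S m f b q)
      = myE S m f a (AdicCompletion.transitionMap m M hab q) := by
  obtain ⟨x, rfl⟩ := Submodule.Quotient.mk_surjective _ q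
  rw [myE_mk]
  rfl

lemma myE_smul (n : ℕ) (r : R) (q : M ⧸ (m ^ n • ⊤ : Submodule R M)) :
    myE S m f n (r • q) = algebraMap R S r • myE S m f n q := by
  obtain ⟨x, rfl⟩ := Submodule.Quotient.mk_surjective _ q
  rw [← Submodule.Quotient.mk_smul, myE_mk, myE_mk, ← Submodule.Quotient.mk_smul,
    algebraMap_smul, map_smul]


/-- The completion equivalence. -/
noncomputable def myCompletionEquiv :
    AdicCompletion m M ≃+ AdicCompletion (m.map (algebraMap R S)) N where
  toFun x := ⟨fun n => myE S m f n (x.val n), fun {a b} hab => by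
    rw [myE_compat, x.2 hab]⟩
  invFun y := ⟨fun n => (myE S m f n).symm (y.val n), fun {a b} hab => by
    apply (myE S m f a).injective
    rw [← myE_compat]
    simp only [AddEquiv.apply_symm_apply]
    exact y.2 hab⟩
  left_inv x := Subtype.ext (funext fun n => (myE S m f n).symm_apply_apply _)
  right_inv y := Subtype.ext (funext fun n => (myE S m f n).apply_symm_apply _)
  map_add' x y := Subtype.ext (funext fun n => by
    show myE S m f n ((x + y).val n) = myE S m f n (x.val n) + myE S m f n (y.val n)
    rw [AdicCompletion.val_add_apply, map_add])

lemma myCompletionEquiv_val (x : AdicCompletion m M) (n : ℕ) :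
    (myCompletionEquiv S m f x).val n = myE S m f n (x.val n) := rfl

lemma myCompletionEquiv_of (x : M) :
    myCompletionEquiv S m f (AdicCompletion.of m M x)
      = AdicCompletion.of (m.map (algebraMap R S)) N (f x) := by
  apply AdicCompletion.ext
  intro n
  rw [myCompletionEquiv_val, AdicCompletion.of_apply, AdicCompletion.of_apply,
    Submodule.mkQ_apply, Submodule.mkQ_apply, myE_mk]

lemma myCompletionEquiv_smul (r : R) (y : AdicCompletion m M) :
    myCompletionEquiv S m f (r • y) = algebraMap R S r • myCompletionEquiv S m f y := by
  apply AdicCompletion.ext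
  intro n
  rw [myCompletionEquiv_val, AdicCompletion.val_smul_apply, AdicCompletion.val_smul_apply,
    myCompletionEquiv_val, myE_smul]

end Aux2

/-- Let `R` be a commutative Noetherian ring, `m` a maximal ideal of `R`, and
`M` a finitely generated `R`-module.  Let `M_m` denote the localization of `M` at `m`, and let
`m₀ = m · R_m` be the maximal ideal of the local ring `R_m`.  Then the natural morphism
`M → M_m` induces an isomorphism between the `m`-adic completion of `M` and the `m₀`-adic
completion of `M_m`.  (The isomorphism is additive and semilinear over the canonical map
`R → R_m`, and it is compatible with the natural maps of `M` and `M_m` into their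
completions.) -/
theorem adicCompletion_equiv_adicCompletion_localization
    {R : Type*} [CommRing R] [IsNoetherianRing R] (m : Ideal R) [m.IsMaximal]
    (M : Type*) [AddCommGroup M] [Module R M] [Module.Finite R M] :
    ∃ e : AdicCompletion m M ≃+
        AdicCompletion (m.map (algebraMap R (Localization.AtPrime m)))
          (LocalizedModule m.primeCompl M),
      (∀ x : M,
        e (AdicCompletion.of m M x) =
          AdicCompletion.of (m.map (algebraMap R (Localization.AtPrime m)))
            (LocalizedModule m.primeCompl M)
            (LocalizedModule.mkLinearMap m.primeCompl M x)) ∧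
      (∀ (r : R) (y : AdicCompletion m M),
        e (r • y) = algebraMap R (Localization.AtPrime m) r • e y) := by
  exact ⟨myCompletionEquiv (Localization.AtPrime m) m
      (LocalizedModule.mkLinearMap m.primeCompl M),
    fun x => myCompletionEquiv_of _ m _ x,
    fun r y => myCompletionEquiv_smul _ m _ r y⟩
end

section
/- Let R be a commutative ring that is a finitely generated ℂ-algebra, let m be a maximal ideal of R, and let M be a finitely generated R-module. Denote by M̂ the m-adic completion of M, regarded as a ℂ-vector space. Then M̂ is finite-dimensional over ℂ if and only if m is an isolated point of the support of M (i.e., either m ∉ supp(M), or {m} is open in supp(M) viewed as a subspace of the prime spectrum of R). -/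
set_option linter.unusedSectionVars false

attribute [local instance] RestrictScalars.moduleOrig

def rsModuleG (R S M : Type*) [CommSemiring R] [Semiring S] [Algebra R S] [AddCommGroup M]
    [Module S M] : @Module R (RestrictScalars R S M) _ AddCommGroup.toAddCommMonoid :=
  RestrictScalars.module R S M

def rsModuleOrigG (R S M : Type*) [Semiring S] [AddCommGroup M]
    [Module S M] : @Module S (RestrictScalars R S M) _ AddCommGroup.toAddCommMonoid :=
  RestrictScalars.moduleOrig R S M

abbrev rsACM (R S M : Type*) [AddCommGroup M] : AddCommMonoid (RestrictScalars R S M) :=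
  AddCommGroup.toAddCommMonoid
attribute [local instance 2000] rsACM
attribute [local instance] rsModuleG rsModuleOrigG

lemma rsIST (R S M : Type*) [CommSemiring R] [Semiring S] [Algebra R S] [AddCommGroup M]
    [Module S M] : IsScalarTower R S (RestrictScalars R S M) :=
  RestrictScalars.isScalarTower R S M

attribute [local instance] rsIST

open Function

namespace AdicAux

variable {R : Type*} [CommRing R] [Algebra ℂ R]

/-- `ℂ`-linear version of an `R`-linear map, between `RestrictScalars` wrappers. -/
def cLin {N P : Type*} [AddCommGroup N] [Module R N] [AddCommGroup P] [Module R P]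
    (f : N →ₗ[R] P) : RestrictScalars ℂ R N →ₗ[ℂ] RestrictScalars ℂ R P where
  toFun x := (RestrictScalars.addEquiv ℂ R P).symm (f (RestrictScalars.addEquiv ℂ R N x))
  map_add' x y := by simp
  map_smul' c x := congrArg (RestrictScalars.addEquiv ℂ R P).symm
    (f.map_smul (algebraMap ℂ R c) (RestrictScalars.addEquiv ℂ R N x))

lemma cLin_coe {N P : Type*} [AddCommGroup N] [Module R N] [AddCommGroup P] [Module R P]
    (f : N →ₗ[R] P) :
    ⇑(cLin (R := R) f) =
      ⇑(RestrictScalars.addEquiv ℂ R P).symm ∘ ⇑f ∘ ⇑(RestrictScalars.addEquiv ℂ R N) := rfl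

lemma cLin_injective {N P : Type*} [AddCommGroup N] [Module R N] [AddCommGroup P] [Module R P]
    {f : N →ₗ[R] P} (hf : Injective (cLin (R := R) f)) : Injective f := by
  intro a b hab
  have h2 := hf (a₁ := (RestrictScalars.addEquiv ℂ R N).symm a)
    (a₂ := (RestrictScalars.addEquiv ℂ R N).symm b)
    (by
      show (RestrictScalars.addEquiv ℂ R P).symm (f a) =
        (RestrictScalars.addEquiv ℂ R P).symm (f b)
      exact congrArg _ hab)
  exact (RestrictScalars.addEquiv ℂ R N).symm.injective h2

lemma fd_of_surjective {N P : Type*} [AddCommGroup N] [Module R N] [AddCommGroup P] [Module R P]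
    (f : N →ₗ[R] P) (hf : Surjective f) [FiniteDimensional ℂ (RestrictScalars ℂ R N)] :
    FiniteDimensional ℂ (RestrictScalars ℂ R P) :=
  Module.Finite.of_surjective (cLin (R := R) f) (by
    rw [cLin_coe]
    exact (RestrictScalars.addEquiv ℂ R P).symm.surjective.comp
      (hf.comp (RestrictScalars.addEquiv ℂ R N).surjective))

lemma fd_of_injective {N P : Type*} [AddCommGroup N] [Module R N] [AddCommGroup P] [Module R P]
    (f : N →ₗ[R] P) (hf : Injective f) [FiniteDimensional ℂ (RestrictScalars ℂ R P)] :
    FiniteDimensional ℂ (RestrictScalars ℂ R N) :=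
  FiniteDimensional.of_injective (cLin (R := R) f) (by
    rw [cLin_coe]
    exact (RestrictScalars.addEquiv ℂ R P).symm.injective.comp
      (hf.comp (RestrictScalars.addEquiv ℂ R N).injective))

lemma fd_ext {V W : Type*} [AddCommGroup V] [Module ℂ V] [AddCommGroup W] [Module ℂ W]
    (f : V →ₗ[ℂ] W) [FiniteDimensional ℂ W] [FiniteDimensional ℂ (LinearMap.ker f)] :
    FiniteDimensional ℂ V := by
  obtain ⟨q, hq⟩ := Submodule.exists_isCompl (LinearMap.ker f)
  haveI : FiniteDimensional ℂ q := FiniteDimensional.of_injective (f.comp q.subtype) (by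
    intro a b h
    have hab : (a : V) - b ∈ LinearMap.ker f ⊓ q :=
      Submodule.mem_inf.mpr ⟨LinearMap.mem_ker.mpr (by rw [map_sub, sub_eq_zero]; exact h),
        sub_mem a.2 b.2⟩
    rw [hq.inf_eq_bot] at hab
    exact Subtype.ext (sub_eq_zero.mp hab)
    )
  exact Module.Finite.equiv (Submodule.prodEquivOfIsCompl _ q hq)

lemma finite_residue [Algebra.FiniteType ℂ R] (m : Ideal R) [m.IsMaximal] :
    Module.Finite ℂ (R ⧸ m) := by
  letI : Field (R ⧸ m) := Ideal.Quotient.field m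
  haveI : Algebra.FiniteType ℂ (R ⧸ m) :=
    Algebra.FiniteType.of_surjective (Ideal.Quotient.mkₐ ℂ m)
      (Ideal.Quotient.mkₐ_surjective ℂ m)
  exact finite_of_finite_type_of_isJacobsonRing ℂ (R ⧸ m)

lemma fd_of_annihilated [Algebra.FiniteType ℂ R] (m : Ideal R) [m.IsMaximal]
    {N : Type*} [AddCommGroup N] [Module R N] [Module.Finite R N]
    (hN : ∀ r ∈ m, ∀ x : N, r • x = 0) :
    FiniteDimensional ℂ (RestrictScalars ℂ R N) := by
  have hTor : Module.IsTorsionBySet R (RestrictScalars ℂ R N) (m : Set R) :=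
    fun x r => hN r.1 r.2 x
  letI : Module (R ⧸ m) (RestrictScalars ℂ R N) := hTor.module
  haveI h1 : IsScalarTower ℂ (R ⧸ m) (RestrictScalars ℂ R N) := hTor.isScalarTower
  haveI h2 : IsScalarTower R (R ⧸ m) (RestrictScalars ℂ R N) := hTor.isScalarTower
  haveI : Module.Finite R (RestrictScalars ℂ R N) := ‹Module.Finite R N›
  haveI : Module.Finite (R ⧸ m) (RestrictScalars ℂ R N) :=
    Module.Finite.of_restrictScalars_finite R (R ⧸ m) (RestrictScalars ℂ R N)
  haveI : Module.Finite ℂ (R ⧸ m) := finite_residue m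
  exact Module.Finite.trans (R ⧸ m) (RestrictScalars ℂ R N)

variable [Algebra.FiniteType ℂ R] (m : Ideal R) [m.IsMaximal]
variable (M : Type*) [AddCommGroup M] [Module R M] [Module.Finite R M]

/-- The natural surjection `M/m^{n+1}M → M/m^nM`. -/
def qmap (n : ℕ) :
    (M ⧸ (m ^ (n + 1) • ⊤ : Submodule R M)) →ₗ[R] (M ⧸ (m ^ n • ⊤ : Submodule R M)) :=
  Submodule.mapQ _ _ LinearMap.id
    (by simpa using Submodule.smul_mono_left (Ideal.pow_le_pow_right n.le_succ))

lemma qmap_mk (n : ℕ) (x : M) :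
    qmap m M n (Submodule.Quotient.mk x) = Submodule.Quotient.mk x :=
  by unfold qmap; rw [Submodule.mapQ_apply]; rfl

lemma qmap_surjective (n : ℕ) : Surjective (qmap m M n) := by
  intro y
  obtain ⟨x, rfl⟩ := Submodule.Quotient.mk_surjective _ y
  exact ⟨Submodule.Quotient.mk x, qmap_mk m M n x⟩

lemma ker_qmap (n : ℕ) :
    LinearMap.ker (qmap m M n) =
      (m ^ n • ⊤ : Submodule R M).map (m ^ (n + 1) • ⊤ : Submodule R M).mkQ := by
  ext x
  obtain ⟨y, rfl⟩ := Submodule.Quotient.mk_surjective _ x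
  constructor
  · intro hy
    rw [LinearMap.mem_ker, qmap_mk, Submodule.Quotient.mk_eq_zero] at hy
    exact ⟨y, hy, rfl⟩
  · rintro ⟨z, hz, hzy⟩
    rw [LinearMap.mem_ker]
    have : ((m ^ (n + 1) • ⊤ : Submodule R M).mkQ) z = Submodule.Quotient.mk z := rfl
    rw [this] at hzy
    rw [← hzy, qmap_mk, Submodule.Quotient.mk_eq_zero]
    exact hz

lemma fd_quotient (n : ℕ) :
    FiniteDimensional ℂ (RestrictScalars ℂ R (M ⧸ (m ^ n • ⊤ : Submodule R M))) := by
  haveI : IsNoetherianRing R := Algebra.FiniteType.isNoetherianRing ℂ R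
  induction n with
  | zero =>
      haveI : Subsingleton (M ⧸ (m ^ 0 • ⊤ : Submodule R M)) := by
        rw [Submodule.Quotient.subsingleton_iff, pow_zero, Ideal.one_eq_top, Submodule.top_smul]
      haveI : Subsingleton (RestrictScalars ℂ R (M ⧸ (m ^ 0 • ⊤ : Submodule R M))) := ‹_›
      infer_instance
  | succ n ih =>
      haveI := ih
      set K := (m ^ n • ⊤ : Submodule R M).map (m ^ (n + 1) • ⊤ : Submodule R M).mkQ with hK
      haveI : Module.Finite R K :=
        Module.Finite.iff_fg.mpr (IsNoetherian.noetherian K)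
      have hKfd : FiniteDimensional ℂ (RestrictScalars ℂ R K) := by
        apply fd_of_annihilated m
        rintro r hr ⟨x, hx⟩
        obtain ⟨y, hy, rfl⟩ := hx
        have h1 : r • y ∈ (m ^ (n + 1) • ⊤ : Submodule R M) := by
          have : r • y ∈ m • (m ^ n • ⊤ : Submodule R M) :=
            Submodule.smul_mem_smul hr hy
          rwa [← mul_smul, ← pow_succ'] at this
        apply Subtype.ext
        show r • ((m ^ (n + 1) • ⊤ : Submodule R M).mkQ y) = 0
        rw [← map_smul, Submodule.mkQ_apply, Submodule.Quotient.mk_eq_zero]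
        exact h1
      -- extension along qmap
      haveI : FiniteDimensional ℂ
          (RestrictScalars ℂ R (M ⧸ (m ^ n • ⊤ : Submodule R M))) := ih
      haveI : FiniteDimensional ℂ (LinearMap.ker (cLin (R := R) (qmap m M n))) := by
        apply Module.Finite.of_surjective
          (M := RestrictScalars ℂ R K)
          (LinearMap.codRestrict _
            (cLin (R := R) (K.subtype ∘ₗ LinearMap.id)) ?_) ?_
        · intro x
          rw [LinearMap.mem_ker]
          obtain ⟨y, hy, hyx⟩ := ((RestrictScalars.addEquiv ℂ R K) x).2
          show (RestrictScalars.addEquiv ℂ R _).symm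
            (qmap m M n (((RestrictScalars.addEquiv ℂ R K) x : K) : M ⧸ _)) = 0
          rw [← hyx, Submodule.mkQ_apply, qmap_mk,
            (Submodule.Quotient.mk_eq_zero _).mpr hy, map_zero]
        · rintro ⟨z, hz⟩
          rw [LinearMap.mem_ker] at hz
          have hz' : qmap m M n ((RestrictScalars.addEquiv ℂ R _) z) = 0 := by
            have h := congrArg
              (RestrictScalars.addEquiv ℂ R (M ⧸ (m ^ n • ⊤ : Submodule R M))) hz
            rwa [cLin_coe, Function.comp_apply, Function.comp_apply,
              (RestrictScalars.addEquiv _ _ _).apply_symm_apply, map_zero] at h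
          obtain ⟨y, hy⟩ := Submodule.Quotient.mk_surjective _
            ((RestrictScalars.addEquiv ℂ R _) z)
          have hyK : y ∈ (m ^ n • ⊤ : Submodule R M) := by
            rw [← hy, qmap_mk] at hz'
            rwa [Submodule.Quotient.mk_eq_zero] at hz'
          refine ⟨(RestrictScalars.addEquiv ℂ R K).symm
            ⟨(RestrictScalars.addEquiv ℂ R _) z, ⟨y, hyK, hy⟩⟩, ?_⟩
          apply Subtype.ext
          rfl
      exact fd_ext (cLin (R := R) (qmap m M n))

lemma smul_top_succ (n : ℕ) :
    (m ^ (n + 1) • ⊤ : Submodule R M) = m • (m ^ n • ⊤ : Submodule R M) := by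
  rw [pow_succ', mul_smul]

lemma stab_succ {g : R} (hg : g ∉ m) {n : ℕ}
    (h0 : ∀ x ∈ (m ^ n • ⊤ : Submodule R M), g • x = 0) :
    (m ^ n • ⊤ : Submodule R M) = m ^ (n + 1) • ⊤ := by
  refine le_antisymm ?_ (Submodule.smul_mono_left (Ideal.pow_le_pow_right n.le_succ))
  intro x hx
  obtain ⟨b, c, hc, h1⟩ := (‹m.IsMaximal› : m.IsMaximal).exists_inv hg
  have h2 : x = c • x := by
    conv_lhs => rw [← one_smul R x, ← h1]
    rw [add_smul, mul_smul, h0 x hx, smul_zero, zero_add]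
  rw [h2, smul_top_succ]
  exact Submodule.smul_mem_smul hc hx

lemma stab_ge {g : R} (hg : g ∉ m) {n : ℕ}
    (h0 : ∀ x ∈ (m ^ n • ⊤ : Submodule R M), g • x = 0) :
    ∀ j, n ≤ j → (m ^ j • ⊤ : Submodule R M) = m ^ n • ⊤ := by
  intro j hj
  induction j, hj using Nat.le_induction with
  | base => rfl
  | succ j hj ih =>
      rw [smul_top_succ, ih, ← smul_top_succ, ← stab_succ m M hg h0]

lemma fd_completion_of_stab {g : R} (hg : g ∉ m) {n : ℕ}
    (h0 : ∀ x ∈ (m ^ n • ⊤ : Submodule R M), g • x = 0) :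
    FiniteDimensional ℂ (RestrictScalars ℂ R (AdicCompletion m M)) := by
  haveI := fd_quotient m M n
  apply fd_of_injective (AdicCompletion.eval m M n)
  rw [← LinearMap.ker_eq_bot]
  ext x
  simp only [LinearMap.mem_ker, Submodule.mem_bot]
  constructor
  · intro hx
    have hx0 : x.val n = 0 := hx
    apply AdicCompletion.ext
    intro j
    rw [AdicCompletion.val_zero_apply]
    rcases le_total j n with hj | hj
    · rw [← x.property hj, hx0, map_zero]
    · obtain ⟨y, hy⟩ := Submodule.Quotient.mk_surjective _ (x.val j)
      have h2 := x.property hj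
      rw [← hy, hx0] at h2
      change Submodule.Quotient.mk y = (0 : M ⧸ (m ^ n • ⊤ : Submodule R M)) at h2
      have hyj : y ∈ (m ^ j • ⊤ : Submodule R M) := by
        rw [stab_ge m M hg h0 j hj]
        rwa [Submodule.Quotient.mk_eq_zero] at h2
      rw [← hy, Submodule.Quotient.mk_eq_zero]
      exact hyj
  · rintro rfl
    exact map_zero _

lemma finrank_le_of_surj {V W : Type*} [AddCommGroup V] [Module ℂ V] [AddCommGroup W]
    [Module ℂ W] [FiniteDimensional ℂ V] (f : V →ₗ[ℂ] W) (hf : Surjective f) :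
    Module.finrank ℂ W ≤ Module.finrank ℂ V := by
  have h1 : LinearMap.range f = ⊤ := LinearMap.range_eq_top.mpr hf
  calc Module.finrank ℂ W = Module.finrank ℂ (⊤ : Submodule ℂ W) := finrank_top ℂ W |>.symm
    _ = Module.finrank ℂ (LinearMap.range f) := by rw [h1]
    _ ≤ Module.finrank ℂ V := LinearMap.finrank_range_le f

lemma stab_of_fd [FiniteDimensional ℂ (RestrictScalars ℂ R (AdicCompletion m M))] :
    ∃ n, (m ^ n • ⊤ : Submodule R M) = m ^ (n + 1) • ⊤ := by
  haveI hfd : ∀ k, FiniteDimensional ℂ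
      (RestrictScalars ℂ R (M ⧸ (m ^ k • ⊤ : Submodule R M))) := fun k => fd_quotient m M k
  set d : ℕ → ℕ := fun k =>
    Module.finrank ℂ (RestrictScalars ℂ R (M ⧸ (m ^ k • ⊤ : Submodule R M))) with hd
  have hmono : ∀ k, d k ≤ d (k + 1) := fun k =>
    finrank_le_of_surj (cLin (R := R) (qmap m M k)) (by
      rw [cLin_coe]
      exact (RestrictScalars.addEquiv ℂ R _).symm.surjective.comp
        ((qmap_surjective m M k).comp (RestrictScalars.addEquiv ℂ R _).surjective))
  have hbound : ∀ k, d k ≤ Module.finrank ℂ (RestrictScalars ℂ R (AdicCompletion m M)) :=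
    fun k => finrank_le_of_surj (cLin (R := R) (AdicCompletion.eval m M k)) (by
      rw [cLin_coe]
      exact (RestrictScalars.addEquiv ℂ R _).symm.surjective.comp
        ((AdicCompletion.eval_surjective m M k).comp
          (RestrictScalars.addEquiv ℂ R _).surjective))
  have hstab : ∃ n, d (n + 1) ≤ d n := by
    by_contra hcon
    push_neg at hcon
    have hsm : StrictMono d := strictMono_nat_of_lt_succ (fun k => hcon k)
    have h1 := hsm.le_apply
      (x := Module.finrank ℂ (RestrictScalars ℂ R (AdicCompletion m M)) + 1)
    have h2 := hbound (Module.finrank ℂ (RestrictScalars ℂ R (AdicCompletion m M)) + 1)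
    omega
  obtain ⟨n, hn⟩ := hstab
  refine ⟨n, le_antisymm ?_ (Submodule.smul_mono_left (Ideal.pow_le_pow_right n.le_succ))⟩
  have heq : d (n + 1) = d n := le_antisymm hn (hmono n)
  have hinjC : Injective (cLin (R := R) (qmap m M n)) :=
    (LinearMap.injective_iff_surjective_of_finrank_eq_finrank heq).mpr (by
      rw [cLin_coe]
      exact (RestrictScalars.addEquiv ℂ R _).symm.surjective.comp
        ((qmap_surjective m M n).comp (RestrictScalars.addEquiv ℂ R _).surjective))
  have hinj : Injective (qmap m M n) := cLin_injective hinjC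
  intro x hx
  have h3 : qmap m M n (Submodule.Quotient.mk x) = qmap m M n 0 := by
    rw [map_zero, qmap_mk, Submodule.Quotient.mk_eq_zero]
    exact hx
  have h4 := hinj h3
  rwa [Submodule.Quotient.mk_eq_zero] at h4

lemma exists_annihilating [hm : m.IsMaximal]
    (h : (⟨m, hm.isPrime⟩ : PrimeSpectrum R) ∉ Module.support R M ∨
      IsOpen {x : Module.support R M |
        (x : PrimeSpectrum R) = (⟨m, hm.isPrime⟩ : PrimeSpectrum R)}) :
    ∃ g ∉ m, ∃ n : ℕ, ∀ x ∈ (m ^ n • ⊤ : Submodule R M), g • x = 0 := by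
  haveI : IsNoetherianRing R := Algebra.FiniteType.isNoetherianRing ℂ R
  by_cases hsupp : (⟨m, hm.isPrime⟩ : PrimeSpectrum R) ∈ Module.support R M
  · have hopen := h.resolve_left (fun hno => hno hsupp)
    obtain ⟨U, hU, hUS⟩ := isOpen_induced_iff.mp hopen
    have hmU : (⟨m, hm.isPrime⟩ : PrimeSpectrum R) ∈ U := by
      have heS : (⟨⟨m, hm.isPrime⟩, hsupp⟩ : Module.support R M) ∈
          {x : Module.support R M |
            (x : PrimeSpectrum R) = (⟨m, hm.isPrime⟩ : PrimeSpectrum R)} := rfl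
      rw [← hUS] at heS
      exact heS
    obtain ⟨V, ⟨f, rfl⟩, hmV, hVU⟩ :=
      PrimeSpectrum.isTopologicalBasis_basic_opens.exists_subset_of_mem_open hmU hU
    have hfm : f ∉ m := hmV
    have hrad : ∀ y ∈ m, f * y ∈ (Module.annihilator R M).radical := by
      intro y hy
      rw [Ideal.radical_eq_sInf]
      refine Ideal.mem_sInf.mpr ?_
      rintro J ⟨hJle, hJp⟩
      by_cases hfJ : f ∈ J
      · exact J.mul_mem_right y hfJ
      · have hJsupp : (⟨J, hJp⟩ : PrimeSpectrum R) ∈ Module.support R M := by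
          rw [Module.support_eq_zeroLocus]
          exact hJle
        have hJV : (⟨J, hJp⟩ : PrimeSpectrum R) ∈
            (PrimeSpectrum.basicOpen f : Set (PrimeSpectrum R)) := hfJ
        have hJU : (⟨⟨J, hJp⟩, hJsupp⟩ : Module.support R M) ∈ Subtype.val ⁻¹' U :=
          hVU hJV
        rw [hUS] at hJU
        have hJm : J = m := congrArg PrimeSpectrum.asIdeal hJU
        rw [hJm]
        exact m.mul_mem_left f hy
    have hfg : (Module.annihilator R M).radical.FG := IsNoetherian.noetherian _
    obtain ⟨n, hn⟩ := Ideal.exists_radical_pow_le_of_fg _ hfg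
    refine ⟨f ^ n, fun hpow => hfm (hm.isPrime.mem_of_pow_mem n hpow), n, ?_⟩
    intro x hx
    have hle1 : Ideal.span {f} * m ≤ (Module.annihilator R M).radical := by
      refine Ideal.mul_le.mpr ?_
      intro r hr s hs
      obtain ⟨a, rfl⟩ := Ideal.mem_span_singleton'.mp hr
      rw [mul_assoc]
      exact Ideal.mul_mem_left _ a (hrad s hs)
    have hle3 : Ideal.span {f ^ n} * m ^ n ≤ Module.annihilator R M := by
      rw [← Ideal.span_singleton_pow, ← mul_pow]
      exact le_trans (Ideal.pow_right_mono hle1 n) hn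
    have hmem : f ^ n • x ∈ (Ideal.span {f ^ n} * m ^ n) • (⊤ : Submodule R M) := by
      rw [mul_smul]
      exact Submodule.smul_mem_smul (Ideal.mem_span_singleton_self _) hx
    have hbot : (Module.annihilator R M) • (⊤ : Submodule R M) ≤ ⊥ :=
      Submodule.smul_le.mpr (fun r hr y _ =>
        (Submodule.mem_bot R).mpr (Module.mem_annihilator.mp hr y))
    exact (Submodule.mem_bot R).mp (hbot (Submodule.smul_mono_left hle3 hmem))
  · rw [Module.support_eq_zeroLocus, PrimeSpectrum.mem_zeroLocus] at hsupp
    obtain ⟨a, ha, ham⟩ := Set.not_subset.mp hsupp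
    exact ⟨a, ham, 0, fun x _ => Module.mem_annihilator.mp ha x⟩

lemma isolated_of_fd [hm : m.IsMaximal]
    (hFD : FiniteDimensional ℂ (RestrictScalars ℂ R (AdicCompletion m M))) :
    (⟨m, hm.isPrime⟩ : PrimeSpectrum R) ∉ Module.support R M ∨
      IsOpen {x : Module.support R M |
        (x : PrimeSpectrum R) = (⟨m, hm.isPrime⟩ : PrimeSpectrum R)} := by
  haveI : IsNoetherianRing R := Algebra.FiniteType.isNoetherianRing ℂ R
  by_cases hsupp : (⟨m, hm.isPrime⟩ : PrimeSpectrum R) ∈ Module.support R M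
  · right
    haveI := hFD
    obtain ⟨n, hn⟩ := stab_of_fd m M
    have hfgT : (m ^ n • ⊤ : Submodule R M).FG := IsNoetherian.noetherian _
    have hle : (m ^ n • ⊤ : Submodule R M) ≤ m • (m ^ n • ⊤ : Submodule R M) := by
      rw [← smul_top_succ]
      exact le_of_eq hn
    obtain ⟨r, hr1, hr0⟩ :=
      Submodule.exists_sub_one_mem_and_smul_eq_zero_of_fg_of_le_smul m _ hfgT hle
    have hrm : r ∉ m := by
      intro hr
      have h1 : (1 : R) ∈ m := by
        have := m.sub_mem hr hr1
        simpa using this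
      exact hm.ne_top ((Ideal.eq_top_iff_one m).mpr h1)
    have hset : {x : Module.support R M |
          (x : PrimeSpectrum R) = (⟨m, hm.isPrime⟩ : PrimeSpectrum R)} =
        Subtype.val ⁻¹' (PrimeSpectrum.basicOpen r : Set (PrimeSpectrum R)) := by
      ext x
      simp only [Set.mem_setOf_eq, Set.mem_preimage, SetLike.mem_coe,
        PrimeSpectrum.mem_basicOpen]
      constructor
      · intro hx
        rw [hx]
        exact hrm
      · intro hx
        have hann := Module.annihilator_le_of_mem_support x.2
        have hmle : m ≤ (x : PrimeSpectrum R).asIdeal := by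
          intro y hy
          have hann_mem : r * y ^ n ∈ Module.annihilator R M :=
            Module.mem_annihilator.mpr (fun z => by
              rw [mul_smul]
              exact hr0 _ (Submodule.smul_mem_smul (Ideal.pow_mem_pow hy n)
                Submodule.mem_top))
          have h2 := ((x : PrimeSpectrum R).isPrime.mem_or_mem
            (hann hann_mem)).resolve_left hx
          exact (x : PrimeSpectrum R).isPrime.mem_of_pow_mem n h2
        have heq : m = (x : PrimeSpectrum R).asIdeal :=
          hm.eq_of_le (x : PrimeSpectrum R).isPrime.ne_top hmle
        exact PrimeSpectrum.ext heq.symm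
    rw [hset]
    exact (PrimeSpectrum.basicOpen r).isOpen.preimage continuous_subtype_val
  · exact Or.inl hsupp

end AdicAux


/-- Let `R` be a commutative finitely generated `ℂ`-algebra, `m` a maximal
ideal of `R`, and `M` a finitely generated `R`-module.  Then the `m`-adic completion of `M`
(viewed as a `ℂ`-vector space via the algebra map `ℂ → R`) is finite-dimensional over `ℂ` if
and only if `m` is an isolated point of the support of `M`, i.e. either `m ∉ supp M`, or
`{m}` is open in `supp M` with the subspace topology from `Spec R`. -/
theorem adicCompletion_finiteDimensional_iff_isolated_in_support
    {R : Type*} [CommRing R] [Algebra ℂ R] [Algebra.FiniteType ℂ R]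
    (m : Ideal R) [hm : m.IsMaximal]
    (M : Type*) [AddCommGroup M] [Module R M] [Module.Finite R M] :
    @FiniteDimensional ℂ (RestrictScalars ℂ R (AdicCompletion m M)) _ _
      (RestrictScalars.module ℂ R (AdicCompletion m M)) ↔
      ((⟨m, hm.isPrime⟩ : PrimeSpectrum R) ∉ Module.support R M ∨
        IsOpen {x : Module.support R M |
          (x : PrimeSpectrum R) = (⟨m, hm.isPrime⟩ : PrimeSpectrum R)}) := by
  constructor
  · exact AdicAux.isolated_of_fd m M
  · intro h
    obtain ⟨g, hg, n, h0⟩ := AdicAux.exists_annihilating m M h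
    exact AdicAux.fd_completion_of_stab m M hg h0
end

section
/- Let R be a commutative ring that is a finitely generated ℂ-algebra, let m be a maximal ideal of R, and let M be a finitely generated R-module with nonzero localization M_m. Then the m-adic completion of M is finite-dimensional as a ℂ-vector space if and only if the localized module M_m has finite length over the local ring R_m. -/
open Submodule

universe u

section LocSmul
variable {R : Type*} [CommRing R] (p : Submonoid R)
  (A : Type*) [CommRing A] [Algebra R A] [IsLocalization p A]
  {M M' : Type*} [AddCommGroup M] [Module R M] [AddCommGroup M'] [Module R M'] [Module A M']
  [IsScalarTower R A M'] (f : M →ₗ[R] M') [IsLocalizedModule p f]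

theorem localized'_ideal_smul_top (I : Ideal R) :
    (I • ⊤ : Submodule R M).localized' A p f = (I.map (algebraMap R A)) • ⊤ := by
  apply le_antisymm
  · rintro x ⟨a, ha, s, rfl⟩
    have hfa : f a ∈ (I.map (algebraMap R A)) • (⊤ : Submodule A M') := by
      refine Submodule.smul_induction_on ha ?_ ?_
      · intro r hr n _
        rw [map_smul, ← algebraMap_smul A r (f n)]
        exact smul_mem_smul (Ideal.mem_map_of_mem _ hr) mem_top
      · intro y z hy hz
        rw [map_add]; exact add_mem hy hz
    have : IsLocalizedModule.mk' f a s = IsLocalization.mk' A (1 : R) s • f a := by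
      rw [← IsLocalizedModule.mk'_one (S := p) f a]
      rw [IsLocalizedModule.mk'_smul_mk']
      simp
    rw [this]
    exact Submodule.smul_mem _ _ hfa
  · rw [Submodule.smul_le]
    rintro b hb y -
    induction hb using Submodule.span_induction generalizing y with
    | mem c hc =>
      obtain ⟨r, hr, rfl⟩ := hc
      obtain ⟨⟨z, s⟩, rfl⟩ := IsLocalizedModule.mk'_surjective p f y
      refine ⟨r • z, smul_mem_smul hr mem_top, s, ?_⟩
      rw [IsLocalizedModule.mk'_smul, algebraMap_smul]; rfl
    | zero => simp only [zero_smul]; exact zero_mem _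
    | add c d _ _ hc hd => rw [add_smul]; exact add_mem (hc y) (hd y)
    | smul a c _ hc =>
      rw [smul_eq_mul, mul_smul]
      exact Submodule.smul_mem _ a (hc y)

end LocSmul

section Art
variable {R : Type*} [CommRing R]

theorem aux_isArtinian_one (J : Ideal R) [J.IsMaximal]
    (M : Type u) [AddCommGroup M]
    [Module R M] [Module.Finite R M] (h : J • (⊤ : Submodule R M) = ⊥) : IsArtinian R M := by
  have ht : Module.IsTorsionBySet R M J := by
    intro x j
    have hx : j.1 • x ∈ (⊥ : Submodule R M) := h ▸ smul_mem_smul j.2 mem_top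
    simpa using hx
  letI := ht.module
  haveI : IsScalarTower R (R ⧸ J) M := ht.isScalarTower
  haveI : Module.Finite (R ⧸ J) M := Module.Finite.of_restrictScalars_finite R (R ⧸ J) M
  haveI : IsArtinianRing (R ⧸ J) := by
    letI := Ideal.Quotient.field J
    exact DivisionRing.instIsArtinianRing
  haveI hart : IsArtinian (R ⧸ J) M := isArtinian_of_fg_of_artinian'
  let g : Submodule R M → Submodule (R ⧸ J) M := fun N =>
    { carrier := N
      add_mem' := fun h1 h2 => N.add_mem h1 h2
      zero_mem' := N.zero_mem
      smul_mem' := by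
        rintro ⟨c⟩ x hx
        show Ideal.Quotient.mk J c • x ∈ N
        rw [ht.mk_smul]
        exact N.smul_mem _ hx }
  rw [isArtinian_iff]
  refine Subrelation.wf (r := InvImage (· < ·) g) (fun {a b} hab => ?_) (InvImage.wf g hart.wf)
  show g a < g b
  rw [← SetLike.coe_ssubset_coe] at hab ⊢
  exact hab

theorem aux_isArtinian_pow [IsNoetherianRing R] (J : Ideal R) [J.IsMaximal] (k : ℕ) :
    ∀ (M : Type u) [AddCommGroup M] [Module R M] [Module.Finite R M],
      J ^ k • (⊤ : Submodule R M) = ⊥ → IsArtinian R M := by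
  induction k with
  | zero =>
    intro M _ _ _ h
    rw [pow_zero, one_smul] at h
    haveI : Subsingleton M := subsingleton_of_forall_eq 0 fun x ↦ by
      have hx : x ∈ (⊥ : Submodule R M) := h ▸ mem_top
      simpa using hx
    infer_instance
  | succ k ih =>
    intro M _ _ _ h
    set N := J • (⊤ : Submodule R M) with hN
    haveI : IsNoetherian R M := inferInstance
    haveI : Module.Finite R N := Module.Finite.iff_fg.mpr (IsNoetherian.noetherian N)
    have hNk : J ^ k • (⊤ : Submodule R N) = ⊥ := by
      apply Submodule.map_injective_of_injective N.injective_subtype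
      rw [Submodule.map_smul'', Submodule.map_top, Submodule.range_subtype, Submodule.map_bot]
      rw [hN, ← Submodule.smul_assoc, smul_eq_mul, ← pow_succ]
      exact h
    haveI : IsArtinian R N := ih N hNk
    haveI : IsArtinian R (M ⧸ N) := by
      apply aux_isArtinian_one J
      rw [eq_bot_iff, Submodule.smul_le]
      rintro j hj x -
      obtain ⟨y, rfl⟩ := N.mkQ_surjective x
      have hy : j • y ∈ N := smul_mem_smul hj mem_top
      have : N.mkQ (j • y) = 0 := (Submodule.Quotient.mk_eq_zero N).mpr hy
      simpa using this
    exact isArtinian_of_range_eq_ker N.subtype N.mkQ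
      (by rw [Submodule.range_subtype, Submodule.ker_mkQ])

end Art

section Fin
variable {R : Type*} [CommRing R] [Algebra ℂ R] [Algebra.FiniteType ℂ R]

theorem aux_finiteC_one (m : Ideal R) [m.IsMaximal]
    (V : Type u) [AddCommGroup V] [Module R V] [Module ℂ V] [IsScalarTower ℂ R V]
    [Module.Finite R V] (h : m • (⊤ : Submodule R V) = ⊥) : Module.Finite ℂ V := by
  have ht : Module.IsTorsionBySet R V m := by
    intro x j
    have hx : j.1 • x ∈ (⊥ : Submodule R V) := h ▸ smul_mem_smul j.2 mem_top
    simpa using hx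
  letI := ht.module
  haveI : IsScalarTower R (R ⧸ m) V := ht.isScalarTower
  haveI : Module.Finite (R ⧸ m) V := Module.Finite.of_restrictScalars_finite R (R ⧸ m) V
  haveI : Algebra.FiniteType ℂ (R ⧸ m) :=
    Algebra.FiniteType.of_surjective
      (Ideal.Quotient.mkₐ ℂ m) (Ideal.Quotient.mkₐ_surjective ℂ m)
  haveI : Module.Finite ℂ (R ⧸ m) := by
    letI := Ideal.Quotient.field m
    exact finite_of_finite_type_of_isJacobsonRing ℂ (R ⧸ m)
  haveI : IsScalarTower ℂ (R ⧸ m) V := by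
    refine ⟨fun c q v => ?_⟩
    obtain ⟨r, rfl⟩ := Ideal.Quotient.mk_surjective (I := m) q
    have h1 : c • (Ideal.Quotient.mk m r) = Ideal.Quotient.mk m (c • r) := by
      rw [Algebra.smul_def, Algebra.smul_def, ← Ideal.Quotient.mk_algebraMap, ← map_mul]
    rw [h1, ht.mk_smul, ht.mk_smul]
    exact smul_assoc c r v
  exact Module.Finite.trans (R ⧸ m) V

theorem aux_finiteC_pow (m : Ideal R) [m.IsMaximal] (k : ℕ) :
    ∀ (V : Type u) [AddCommGroup V] [Module R V] [Module ℂ V] [IsScalarTower ℂ R V]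
      [Module.Finite R V], m ^ k • (⊤ : Submodule R V) = ⊥ → Module.Finite ℂ V := by
  haveI : IsNoetherianRing R := Algebra.FiniteType.isNoetherianRing ℂ R
  induction k with
  | zero =>
    intro V _ _ _ _ _ h
    rw [pow_zero, one_smul] at h
    haveI : Subsingleton V := subsingleton_of_forall_eq 0 fun x ↦ by
      have hx : x ∈ (⊥ : Submodule R V) := h ▸ mem_top
      simpa using hx
    exact Module.Finite.of_surjective (0 : (Fin 0 → ℂ) →ₗ[ℂ] V)
      (fun v => ⟨0, Subsingleton.elim _ _⟩)
  | succ k ih =>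
    intro V _ _ _ _ _ h
    set N := m • (⊤ : Submodule R V) with hN
    haveI : IsNoetherian R V := inferInstance
    haveI : Module.Finite R N := Module.Finite.iff_fg.mpr (IsNoetherian.noetherian N)
    have hNk : m ^ k • (⊤ : Submodule R N) = ⊥ := by
      apply Submodule.map_injective_of_injective N.injective_subtype
      rw [Submodule.map_smul'', Submodule.map_top, Submodule.range_subtype, Submodule.map_bot]
      rw [hN, ← Submodule.smul_assoc, smul_eq_mul, ← pow_succ]
      exact h
    haveI hfN : Module.Finite ℂ N := ih N hNk
    haveI hfQ : Module.Finite ℂ (V ⧸ N) := by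
      apply aux_finiteC_one m
      rw [eq_bot_iff, Submodule.smul_le]
      rintro j hj x -
      obtain ⟨y, rfl⟩ := N.mkQ_surjective x
      have hy : j • y ∈ N := smul_mem_smul hj mem_top
      have : N.mkQ (j • y) = 0 := (Submodule.Quotient.mk_eq_zero N).mpr hy
      simpa using this
    haveI : IsNoetherian ℂ N := IsNoetherian.iff_fg.mpr hfN
    haveI : IsNoetherian ℂ (V ⧸ N) := IsNoetherian.iff_fg.mpr hfQ
    have : IsNoetherian ℂ V := by
      refine isNoetherian_of_range_eq_ker
        (N.subtype.restrictScalars ℂ) (N.mkQ.restrictScalars ℂ) ?_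
      have h1 : LinearMap.range (N.subtype.restrictScalars ℂ) = Submodule.restrictScalars ℂ N := by
        ext x; simp [LinearMap.mem_range]
      rw [h1, LinearMap.ker_restrictScalars, Submodule.ker_mkQ]
    exact IsNoetherian.iff_fg.mp this

end Fin

theorem aux_localized₀_top {R : Type*} [CommRing R] {m P : Ideal R} [m.IsMaximal] [P.IsMaximal]
    (hne : ¬ m ≤ P) {M Mₚ : Type*} [AddCommGroup M] [Module R M] [AddCommGroup Mₚ] [Module R Mₚ]
    (f : M →ₗ[R] Mₚ) [IsLocalizedModule P.primeCompl f] (j : ℕ) :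
    (m ^ j • ⊤ : Submodule R M).localized₀ P.primeCompl f = ⊤ := by
  obtain ⟨x, hxm, hxP⟩ := SetLike.not_le_iff_exists.mp hne
  rw [eq_top_iff]
  rintro y -
  obtain ⟨⟨z, s⟩, rfl⟩ := IsLocalizedModule.mk'_surjective P.primeCompl f y
  refine ⟨x ^ j • z, smul_mem_smul (Ideal.pow_mem_pow hxm j) mem_top,
    (⟨x, hxP⟩ : P.primeCompl) ^ j * s, ?_⟩
  show IsLocalizedModule.mk' f ((⟨x, hxP⟩ : P.primeCompl) ^ j • z) _ = _
  rw [IsLocalizedModule.mk'_cancel_left]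
  rfl

/-- Let `R` be a commutative finitely generated `ℂ`-algebra, `m` a maximal
ideal of `R`, and `M` a finitely generated `R`-module whose localization `M_m` is nonzero.
Then the `m`-adic completion of `M` is finite-dimensional as a `ℂ`-vector space if and only
if the localized module `M_m` has finite length over the local ring `R_m`. -/
theorem adicCompletion_finiteDimensional_iff_isFiniteLength_localization
    {R : Type*} [CommRing R] [Algebra ℂ R] [Algebra.FiniteType ℂ R]
    (m : Ideal R) [m.IsMaximal]
    (M : Type*) [AddCommGroup M] [Module R M] [Module.Finite R M]
    (hM : Nontrivial (LocalizedModule m.primeCompl M)) :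
    @FiniteDimensional ℂ (RestrictScalars ℂ R (AdicCompletion m M)) _ _
      (RestrictScalars.module ℂ R (AdicCompletion m M)) ↔
      IsFiniteLength (Localization.AtPrime m) (LocalizedModule m.primeCompl M) := by
  classical
  haveI : IsNoetherianRing R := Algebra.FiniteType.isNoetherianRing ℂ R
  set A := Localization.AtPrime m with hA
  set Mm := LocalizedModule m.primeCompl M with hMm
  set f : M →ₗ[R] Mm := LocalizedModule.mkLinearMap m.primeCompl M with hf
  haveI : IsNoetherianRing A := IsLocalization.isNoetherianRing m.primeCompl A inferInstance
  haveI : Module.Finite A Mm := Module.Finite.of_isLocalizedModule m.primeCompl f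
  set I' : Ideal A := m.map (algebraMap R A) with hI'
  have loc : ∀ j : ℕ, (m ^ j • ⊤ : Submodule R M).localized' A m.primeCompl f = I' ^ j • ⊤ := by
    intro j
    rw [localized'_ideal_smul_top, hI', Ideal.map_pow]
  -- The pivot property
  have h1 : @FiniteDimensional ℂ (RestrictScalars ℂ R (AdicCompletion m M)) _ _
      (RestrictScalars.module ℂ R (AdicCompletion m M)) →
      ∃ k : ℕ, (m ^ (k + 1) • ⊤ : Submodule R M) = m ^ k • ⊤ := by
    intro hFD
    letI : Module ℂ (AdicCompletion m M) := RestrictScalars.module ℂ R (AdicCompletion m M)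
    haveI : IsScalarTower ℂ R (AdicCompletion m M) := ⟨fun c r x => by
      show (c • r) • x = (algebraMap ℂ R c) • (r • x)
      rw [Algebra.smul_def, mul_smul]⟩
    haveI : Module.Finite ℂ (AdicCompletion m M) := hFD
    haveI hart0 : IsArtinian ℂ (AdicCompletion m M) := isArtinian_of_fg_of_artinian'
    have hart : IsArtinian R (AdicCompletion m M) := isArtinian_of_tower ℂ hart0
    obtain ⟨k, hk⟩ := IsArtinian.monotone_stabilizes (R := R) (M := AdicCompletion m M)
      ⟨fun n => OrderDual.toDual (LinearMap.ker (AdicCompletion.eval m M n)),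
       fun a b hab => OrderDual.toDual_le_toDual.mpr (fun x hx => by
        rw [LinearMap.mem_ker] at hx ⊢
        have htr := AdicCompletion.transitionMap_comp_eval_apply (I := m) (M := M) hab x
        rw [AdicCompletion.eval_apply] at hx ⊢
        rw [← htr, hx, map_zero])⟩
    refine ⟨k, le_antisymm (smul_mono_left (Ideal.pow_le_pow_right (Nat.le_succ k))) ?_⟩
    intro x hx
    have h0 : AdicCompletion.of m M x ∈ LinearMap.ker (AdicCompletion.eval m M k) := by
      rw [LinearMap.mem_ker, AdicCompletion.eval_of, Submodule.mkQ_apply]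
      exact (Submodule.Quotient.mk_eq_zero _).mpr hx
    have hker : LinearMap.ker (AdicCompletion.eval m M k) =
        LinearMap.ker (AdicCompletion.eval m M (k + 1)) := hk (k + 1) (Nat.le_succ k)
    rw [hker, LinearMap.mem_ker, AdicCompletion.eval_of, Submodule.mkQ_apply] at h0
    exact (Submodule.Quotient.mk_eq_zero _).mp h0
  have h2 : (∃ k : ℕ, (m ^ (k + 1) • ⊤ : Submodule R M) = m ^ k • ⊤) →
      IsFiniteLength A Mm := by
    rintro ⟨k, hk⟩
    rw [isFiniteLength_iff_isNoetherian_isArtinian]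
    haveI : IsNoetherian A Mm := inferInstance
    refine ⟨inferInstance, ?_⟩
    have hloc : I' ^ (k + 1) • (⊤ : Submodule A Mm) = I' ^ k • ⊤ := by
      rw [← loc (k + 1), ← loc k, hk]
    have hbot : I' ^ k • (⊤ : Submodule A Mm) = ⊥ := by
      refine Submodule.eq_bot_of_le_smul_of_le_jacobson_bot I' _
        (IsNoetherian.noetherian _) ?_ ?_
      · refine le_of_eq ?_
        conv_lhs => rw [← hloc]
        rw [pow_succ', Submodule.mul_smul]
      · rw [IsLocalRing.jacobson_eq_maximalIdeal ⊥ bot_ne_top, hI',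
          Localization.AtPrime.map_eq_maximalIdeal]
    apply aux_isArtinian_pow (IsLocalRing.maximalIdeal A) k Mm
    rw [← Localization.AtPrime.map_eq_maximalIdeal]
    exact hbot
  have h3 : IsFiniteLength A Mm →
      ∃ k : ℕ, (m ^ (k + 1) • ⊤ : Submodule R M) = m ^ k • ⊤ := by
    intro hFL
    obtain ⟨-, hart⟩ := isFiniteLength_iff_isNoetherian_isArtinian.mp hFL
    obtain ⟨k, hk⟩ := IsArtinian.monotone_stabilizes (R := A) (M := Mm)
      ⟨fun n => OrderDual.toDual (I' ^ n • (⊤ : Submodule A Mm)),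
       fun a b hab => OrderDual.toDual_le_toDual.mpr
         (smul_mono_left (Ideal.pow_le_pow_right hab))⟩
    have hloc : I' ^ (k + 1) • (⊤ : Submodule A Mm) = I' ^ k • ⊤ :=
      (hk (k + 1) (Nat.le_succ k)).symm
    refine ⟨k, ?_⟩
    apply Submodule.eq_of_localization₀_maximal
      (Mₚ := fun P _ => LocalizedModule P.primeCompl M)
      (f := fun P _ => LocalizedModule.mkLinearMap P.primeCompl M)
    intro P hP
    by_cases hle : m ≤ P
    · have hPm : m = P := (inferInstance : m.IsMaximal).eq_of_le hP.ne_top hle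
      subst hPm
      rw [← Submodule.restrictScalars_localized' (S := A) (p := m.primeCompl),
        ← Submodule.restrictScalars_localized' (S := A) (p := m.primeCompl)]
      congr 1
      rw [loc (k + 1), loc k, hloc]
    · rw [aux_localized₀_top hle _ (k + 1), aux_localized₀_top hle _ k]
  have h4 : (∃ k : ℕ, (m ^ (k + 1) • ⊤ : Submodule R M) = m ^ k • ⊤) →
      @FiniteDimensional ℂ (RestrictScalars ℂ R (AdicCompletion m M)) _ _
      (RestrictScalars.module ℂ R (AdicCompletion m M)) := by
    rintro ⟨k, hk⟩
    have hstab : ∀ j, k ≤ j → (m ^ j • ⊤ : Submodule R M) = m ^ k • ⊤ := by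
      intro j hj
      induction j, hj using Nat.le_induction with
      | base => rfl
      | succ n hn ihn =>
        calc (m ^ (n + 1) • ⊤ : Submodule R M) = (m * m ^ n) • ⊤ := by rw [pow_succ']
          _ = m • (m ^ n • ⊤) := by rw [mul_smul]
          _ = m • (m ^ k • ⊤) := by rw [ihn]
          _ = (m * m ^ k) • ⊤ := by rw [mul_smul]
          _ = m ^ (k + 1) • ⊤ := by rw [pow_succ']
          _ = m ^ k • ⊤ := hk
    have hinj : Function.Injective (AdicCompletion.eval m M k) := by
      intro x y hxy
      have hz : ∀ n, (x - y).val n = 0 := by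
        intro n
        have hzk : (x - y).val k = 0 := by
          show AdicCompletion.eval m M k (x - y) = 0
          rw [map_sub, hxy, sub_self]
        rcases le_total n k with h | h
        · have := AdicCompletion.transitionMap_comp_eval_apply (I := m) (M := M) h (x - y)
          rw [← this, hzk, map_zero]
        · obtain ⟨y', hy'⟩ := Submodule.Quotient.mk_surjective _ ((x - y).val n)
          have h2 := AdicCompletion.transitionMap_comp_eval_apply (I := m) (M := M) h (x - y)
          rw [hzk, ← hy', (show ∀ z : M, AdicCompletion.transitionMap m M h (Submodule.Quotient.mk z) = Submodule.Quotient.mk z from fun z => rfl)] at h2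
          have hy'' : y' ∈ (m ^ k • ⊤ : Submodule R M) :=
            (Submodule.Quotient.mk_eq_zero _).mp h2
          rw [← hy']
          exact (Submodule.Quotient.mk_eq_zero _).mpr (by rw [hstab n h]; exact hy'')
      have : x - y = 0 := Subtype.ext (funext fun n => hz n)
      exact sub_eq_zero.mp this
    let e : AdicCompletion m M ≃ₗ[R] M ⧸ (m ^ k • ⊤ : Submodule R M) :=
      LinearEquiv.ofBijective (AdicCompletion.eval m M k)
        ⟨hinj, AdicCompletion.eval_surjective m M k⟩
    letI : Module ℂ (M ⧸ (m ^ k • ⊤ : Submodule R M)) :=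
      RestrictScalars.module ℂ R (M ⧸ (m ^ k • ⊤ : Submodule R M))
    haveI : IsScalarTower ℂ R (M ⧸ (m ^ k • ⊤ : Submodule R M)) := ⟨fun c r x => by
      show (c • r) • x = (algebraMap ℂ R c) • (r • x)
      rw [Algebra.smul_def, mul_smul]⟩
    have hbotQ : m ^ k • (⊤ : Submodule R (M ⧸ (m ^ k • ⊤ : Submodule R M))) = ⊥ := by
      rw [eq_bot_iff, Submodule.smul_le]
      rintro j hj x -
      obtain ⟨y, rfl⟩ := (m ^ k • ⊤ : Submodule R M).mkQ_surjective x
      have hy : j • y ∈ (m ^ k • ⊤ : Submodule R M) := smul_mem_smul hj mem_top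
      have : (m ^ k • ⊤ : Submodule R M).mkQ (j • y) = 0 :=
        (Submodule.Quotient.mk_eq_zero _).mpr hy
      simpa using this
    haveI hfQ : Module.Finite ℂ (M ⧸ (m ^ k • ⊤ : Submodule R M)) := by
      apply aux_finiteC_pow m k
      exact hbotQ
    letI : Module ℂ (AdicCompletion m M) := RestrictScalars.module ℂ R (AdicCompletion m M)
    haveI : IsScalarTower ℂ R (AdicCompletion m M) := ⟨fun c r x => by
      show (c • r) • x = (algebraMap ℂ R c) • (r • x)
      rw [Algebra.smul_def, mul_smul]⟩
    have hfin : Module.Finite ℂ (AdicCompletion m M) :=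
      Module.Finite.equiv (e.restrictScalars ℂ).symm
    exact hfin
  constructor
  · intro h; exact h2 (h1 h)
  · intro h; exact h4 (h3 h)
end
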